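/- Suppose F satisfies Assumption 1 with support bound h, and (S_k^{(n_k)})_{k≥1} is a sequence of finite-step sequential persuasions starting from μ satisfying the conditions of Assumption 3. Extend each S_k^{(n_k)} to an infinite sequential persuasion S_k by repeating trivial experiments after the first n_k steps, and represent each S_k by an h-branching sequential persuasion B_k = (C_n, π_n^{(k)}, β_n^{(k)}, η_n^{(k)})_{n∈ℕ}. Then there exists an h-branching sequential persuasion B* = (C_n, π_n^{*}, β_n^{*}, η_n^{*})_{n∈ℕ} starting from μ such that: for every ε > 0 and the corresponding n_ε from Assumption 3, Pr[B* terminates after n_ε steps] ≥ 1 − ε; and for every n ≥ 1 there exists a subsequence (B_{k_l})_{l≥1} such that for every 0 ≤ i ≤ n, (π_i^{(k_l)})_{l≥1} pointwise converges to π_i^{*}, (β_i^{(k_l)})_{l≥1} pointwise converges in total variation to β_i^{*}, and (η_i^{(k_l)})_{l≥1} pointwise weakly converges to η_i^{*}. -/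

import Mathlib

open Filter Topology
open scoped Classical

noncomputable section

/-- Δ(Ω): beliefs, i.e. probability distributions on the finite state space Ω,
as a subspace of Ω → ℝ (its topology agrees with the total-variation one). -/
abbrev Belief (Ω : Type*) [Fintype Ω] :=
  {p : Ω → ℝ // (∀ ω, 0 ≤ p ω) ∧ ∑ ω, p ω = 1}

variable {Ω : Type*} [Fintype Ω]

/-- An element of F₀: a finite-support experiment, i.e. a finitely supported probability
distribution over beliefs (keys are the distinct posteriors p_j, values the positive
weights λ_j). -/
structure SPExp (Ω : Type*) [Fintype Ω] where
  w : Belief Ω →₀ ℝ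
  nonneg : ∀ p, 0 ≤ w p
  sum_one : ∑ p ∈ w.support, w p = 1

namespace SPExp

/-- τ(e): the support of an experiment. -/
def tau (e : SPExp Ω) : Finset (Belief Ω) := e.w.support

/-- Expectation of a real-valued function under an experiment. -/
def expect (e : SPExp Ω) (f : Belief Ω → ℝ) : ℝ := ∑ p ∈ e.w.support, e.w p * f p

/-- σ(e): the barycenter (expectation) of an experiment. -/
def sigma (e : SPExp Ω) : Belief Ω :=
  ⟨fun ω => ∑ p ∈ e.w.support, e.w p * p.val ω,
   fun ω => Finset.sum_nonneg fun p _ => mul_nonneg (e.nonneg p) (p.2.1 ω),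
   by
     calc ∑ ω, ∑ p ∈ e.w.support, e.w p * p.val ω
         = ∑ p ∈ e.w.support, ∑ ω, e.w p * p.val ω := Finset.sum_comm
       _ = ∑ p ∈ e.w.support, e.w p * ∑ ω, p.val ω := by
           refine Finset.sum_congr rfl fun p _ => ?_
           rw [Finset.mul_sum]
       _ = ∑ p ∈ e.w.support, e.w p := by
           refine Finset.sum_congr rfl fun p _ => ?_
           rw [p.2.2, mul_one]
       _ = 1 := e.sum_one⟩

/-- The trivial experiment (1, p). -/
def triv (p : Belief Ω) : SPExp Ω where
  w := Finsupp.single p 1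
  nonneg := fun q => by
    rw [Finsupp.single_apply]
    split <;> norm_num
  sum_one := by
    rw [Finsupp.support_single_ne_zero _ one_ne_zero]
    simp

end SPExp

/-- T: the set of trivial experiments. -/
def Trivials (Ω : Type*) [Fintype Ω] : Set (SPExp Ω) := Set.range SPExp.triv

/-- Weak convergence of experiments, viewed as Borel probability measures on Δ(Ω). -/
def WeakTendsto (es : ℕ → SPExp Ω) (e : SPExp Ω) : Prop :=
  ∀ f : Belief Ω → ℝ, Continuous f →
    Tendsto (fun i => (es i).expect f) atTop (𝓝 (e.expect f))

/-- Convergence of beliefs in total variation. -/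
def TVTendsto (ps : ℕ → Belief Ω) (p : Belief Ω) : Prop :=
  Tendsto (fun i => ∑ ω, |(ps i).val ω - p.val ω|) atTop (𝓝 0)

/-- Histories, most recent step first: entries are (experiment taken, realized posterior);
the starting belief is kept separately. -/
abbrev Hist (Ω : Type*) [Fintype Ω] := List (SPExp Ω × Belief Ω)

/-- last(ξ): the current belief after history ξ started at μ. -/
def lastBelief (μ : Belief Ω) : Hist Ω → Belief Ω
  | [] => μ
  | (_, p) :: _ => p

/-- Pr[ξ]: the probability of a history. -/
def histProb : Hist Ω → ℝ
  | [] => 1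
  | (e, p) :: ξ => e.w p * histProb ξ

/-- A sequential persuasion starting from μ with feasible experiments F, given by its
history-dependent choice of the next (feasible, Bayes-plausible) experiment.  An n-step
sequential persuasion is such a strategy used for n steps; an infinite sequential
persuasion is the strategy itself. -/
structure SeqP {Ω : Type*} [Fintype Ω] (F : Set (SPExp Ω)) (μ : Belief Ω) where
  next : Hist Ω → SPExp Ω
  feasible : ∀ ξ, next ξ ∈ F
  bayes : ∀ ξ, (next ξ).sigma = lastBelief μ ξ

variable {F : Set (SPExp Ω)} {μ : Belief Ω}

/-- Expectation of g over the n-step histories of S extending ξ. -/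
def histExp (S : SeqP F μ) (g : Hist Ω → ℝ) : ℕ → Hist Ω → ℝ
  | 0, ξ => g ξ
  | n + 1, ξ => (S.next ξ).expect fun p => histExp S g n ((S.next ξ, p) :: ξ)

/-- Ξ_n: the set of n-step histories of S. -/
def Hists (S : SeqP F μ) : ℕ → Set (Hist Ω)
  | 0 => {[]}
  | n + 1 => {ξ' | ∃ ξ ∈ Hists S n, ∃ p ∈ (S.next ξ).tau, ξ' = (S.next ξ, p) :: ξ}

/-- ξ padded by l trivial steps. -/
def padHist (μ : Belief Ω) (ξ : Hist Ω) (l : ℕ) : Hist Ω :=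
  List.replicate l (SPExp.triv (lastBelief μ ξ), lastBelief μ ξ) ++ ξ

/-- S terminates after ξ: all subsequent choices (along trivial continuations of ξ)
are the trivial experiment. -/
def TerminatesAfter (S : SeqP F μ) (ξ : Hist Ω) : Prop :=
  ∀ l : ℕ, S.next (padHist μ ξ l) = SPExp.triv (lastBelief μ ξ)

/-- 𝒱(S⁽ⁿ⁾) = E[v(b_n)], the expected utility of the n-step persuasion given by the
first n steps of S. -/
def stepUtility (v : Belief Ω → ℝ) (S : SeqP F μ) (n : ℕ) : ℝ :=
  histExp S (fun ξ => v (lastBelief μ ξ)) n []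

/-- Pr[S terminates after n steps]. -/
def termProb (S : SeqP F μ) (n : ℕ) : ℝ :=
  histExp S (fun ξ => if TerminatesAfter S ξ then 1 else 0) n []

/-- 𝒱(S) for an infinite sequential persuasion S. -/
def infUtility (v : Belief Ω → ℝ) (S : SeqP F μ) : ℝ :=
  ⨆ n : ℕ, histExp S (fun ξ => if TerminatesAfter S ξ then v (lastBelief μ ξ) else 0) n []

/-- Pr[b_n ∈ O] for the belief b_n induced by S after n steps. -/
def massIn (S : SeqP F μ) (O : Set (Belief Ω)) (n : ℕ) : ℝ :=
  histExp S (fun ξ => if lastBelief μ ξ ∈ O then 1 else 0) n []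

/-- v_n(p): the optimal value over n-step sequential persuasions starting from p. -/
def vN (F : Set (SPExp Ω)) (v : Belief Ω → ℝ) (n : ℕ) (p : Belief Ω) : ℝ :=
  ⨆ S : SeqP F p, stepUtility v S n

/-- v_∞(p): the optimal value over infinite sequential persuasions starting from p. -/
def vInf (F : Set (SPExp Ω)) (v : Belief Ω → ℝ) (p : Belief Ω) : ℝ :=
  ⨆ S : SeqP F p, infUtility v S

/-- Assumption 1: a uniform support bound h, and weak closedness of F. -/
def Assumption1 (F : Set (SPExp Ω)) (h : ℕ) : Prop :=
  (∀ e ∈ F, e.tau.card ≤ h) ∧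
  ∀ es : ℕ → SPExp Ω, (∀ i, es i ∈ F) → ∀ e : SPExp Ω, WeakTendsto es e → e ∈ F

/-- Shannon entropy of a belief. -/
def entropy (p : Belief Ω) : ℝ := -∑ ω, p.val ω * Real.log (p.val ω)

/-- Assumption 2: every nontrivial feasible experiment lowers expected entropy by δ. -/
def Assumption2 (F : Set (SPExp Ω)) (δ : ℝ) : Prop :=
  ∀ e ∈ F \ Trivials Ω, e.expect entropy ≤ entropy e.sigma - δ

/-- S is (effectively) an n-step sequential persuasion: after n steps it only takes
trivial experiments. -/
def IsNStep (S : SeqP F μ) (n : ℕ) : Prop :=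
  ∀ ξ : Hist Ω, n ≤ ξ.length → S.next ξ = SPExp.triv (lastBelief μ ξ)

/-- Assumption 3 at prior μ: a sequence of finite-step sequential persuasions whose
values tend to v_∞(μ) and which terminate at a uniform rate. -/
def Assumption3 (F : Set (SPExp Ω)) (v : Belief Ω → ℝ) (μ : Belief Ω) : Prop :=
  ∃ (nk : ℕ → ℕ) (Sk : ℕ → SeqP F μ),
    (∀ k, IsNStep (Sk k) (nk k)) ∧
    Tendsto (fun k => stepUtility v (Sk k) (nk k)) atTop (𝓝 (vInf F v μ)) ∧
    ∀ ε : ℝ, 0 < ε → ∃ N : ℕ, ∀ k, N ≤ nk k → 1 - ε ≤ termProb (Sk k) N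

/-- v̂: the concave closure of v (the value of unconstrained Bayesian persuasion). -/
def concaveClosure (v : Belief Ω → ℝ) (p : Belief Ω) : ℝ :=
  sSup {x : ℝ | ∃ e : SPExp Ω, e.sigma = p ∧ x = e.expect v}

/-- O is implementable for (μ, F). -/
def Implementable (F : Set (SPExp Ω)) (μ : Belief Ω) (O : Set (Belief Ω)) : Prop :=
  ∀ ε : ℝ, 0 < ε → ∃ (n : ℕ) (S : SeqP F μ), 1 - ε < massIn S O n

/-- S is a Markov sequential persuasion compatible with (μ, D, Z, ρ). -/
def MarkovCompatible (S : SeqP F μ) (D Z : Set (Belief Ω)) (ρ : Belief Ω → SPExp Ω) : Prop :=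
  ∀ ξ : Hist Ω,
    (lastBelief μ ξ ∈ D → S.next ξ = ρ (lastBelief μ ξ)) ∧
    (lastBelief μ ξ ∈ Z → S.next ξ = SPExp.triv (lastBelief μ ξ))

/-- The j-th child of vertex m at depth n of the infinite h-ary tree. -/
def treeChild {h n : ℕ} (m : Fin (h ^ n)) (j : Fin h) : Fin (h ^ (n + 1)) :=
  ⟨m.val * h + j.val, by
    have h1 : m.val + 1 ≤ h ^ n := m.isLt
    have h2 : j.val < h := j.isLt
    calc m.val * h + j.val < m.val * h + h := by omega
      _ = (m.val + 1) * h := by ring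
      _ ≤ h ^ n * h := Nat.mul_le_mul h1 le_rfl
      _ = h ^ (n + 1) := (pow_succ h n).symm⟩

/-- An h-branching sequential persuasion starting from μ. -/
structure HBranch (Ω : Type*) [Fintype Ω] (F : Set (SPExp Ω)) (h : ℕ) (μ : Belief Ω) where
  π : ∀ n : ℕ, Fin (h ^ n) → ℝ
  β : ∀ n : ℕ, Fin (h ^ n) → Belief Ω
  η : ∀ n : ℕ, Fin (h ^ n) → SPExp Ω
  π_nonneg : ∀ n m, 0 ≤ π n m
  π_sum : ∀ n : ℕ, ∑ m, π n m = 1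
  η_mem : ∀ n m, η n m ∈ F
  β_root : ∀ m, β 0 m = μ
  compat_sigma : ∀ n m, (η n m).sigma = β n m
  compat_tau : ∀ (n : ℕ) (m : Fin (h ^ n)), ∀ p ∈ (η n m).tau,
    ∃ j : Fin h, β (n + 1) (treeChild m j) = p
  consistent : ∀ (n : ℕ) (m : Fin (h ^ n)) (p : Belief Ω),
    (∑ j : Fin h, if β (n + 1) (treeChild m j) = p then π (n + 1) (treeChild m j) else 0)
      = π n m * (η n m).w p

/-- c' (at depth n + l) is a descendant of c (at depth n) in the h-ary tree. -/
def Descendant {h : ℕ} : {n : ℕ} → (l : ℕ) → Fin (h ^ n) → Fin (h ^ (n + l)) → Prop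
  | _, 0, c, c' => c = c'
  | _, l + 1, c, c' => ∃ c'' j, Descendant l c c'' ∧ c' = treeChild c'' j

namespace HBranch

variable {h : ℕ}

/-- B terminates after vertex m at depth n. -/
def TermAfter (B : HBranch Ω F h μ) (n : ℕ) (m : Fin (h ^ n)) : Prop :=
  B.η n m ∈ Trivials Ω ∧
  ∀ (l : ℕ) (c' : Fin (h ^ (n + l))), Descendant l m c' → 0 < B.π (n + l) c' →
    B.η (n + l) c' ∈ Trivials Ω

/-- Pr[B terminates after n steps]. -/
def termProb (B : HBranch Ω F h μ) (n : ℕ) : ℝ :=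
  ∑ m : Fin (h ^ n), if B.TermAfter n m then B.π n m else 0

end HBranch

/-- B represents the infinite sequential persuasion S (via maps r_n : C_n → Ξ_n). -/
def Represents (S : SeqP F μ) {h : ℕ} (B : HBranch Ω F h μ) : Prop :=
  ∃ r : ∀ n : ℕ, Fin (h ^ n) → Hist Ω,
    ∀ n : ℕ,
      (∀ c, r n c ∈ Hists S n) ∧
      (∀ ξ ∈ Hists S n, histProb ξ = ∑ c, if r n c = ξ then B.π n c else 0) ∧
      (∀ c, lastBelief μ (r n c) = B.β n c ∧ S.next (r n c) = B.η n c) ∧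
      (∀ l : ℕ, ∀ ξ ∈ Hists S n, ∀ ξ' ∈ Hists S (n + l),
        (ξ <:+ ξ' ↔
          ∀ c' : Fin (h ^ (n + l)), r (n + l) c' = ξ' →
            ∃ c : Fin (h ^ n), r n c = ξ ∧ Descendant l c c'))

/-- The number of nontrivial experiments taken along a history. -/
def nontrivCount (ξ : Hist Ω) : ℕ :=
  ξ.countP fun s => decide (s.1 ∉ Trivials Ω)

end
noncomputable section Aux
open Filter Topology

namespace LIC

variable {Ω : Type*} [Fintype Ω]

theorem spexp_ext {e₁ e₂ : SPExp Ω} (h : e₁.w = e₂.w) : e₁ = e₂ := by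
  cases e₁; cases e₂; simpa using h

theorem triv_w (p q : Belief Ω) : (SPExp.triv p).w q = if p = q then 1 else 0 := by
  simp [SPExp.triv, Finsupp.single_apply]

theorem triv_tau (p : Belief Ω) : (SPExp.triv p).tau = {p} := by
  simp [SPExp.tau, SPExp.triv, Finsupp.support_single_ne_zero _ one_ne_zero]

theorem expect_triv (p : Belief Ω) (f : Belief Ω → ℝ) : (SPExp.triv p).expect f = f p := by
  simp [SPExp.expect, SPExp.triv, Finsupp.support_single_ne_zero _ one_ne_zero]

def mkW {h : ℕ} (q : Fin h → Belief Ω) (lam : Fin h → ℝ) : Belief Ω →₀ ℝ :=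
  ∑ j, Finsupp.single (q j) (lam j)

theorem mkW_apply {h : ℕ} (q : Fin h → Belief Ω) (lam : Fin h → ℝ) (p : Belief Ω) :
    mkW q lam p = ∑ j, if q j = p then lam j else 0 := by
  simp [mkW, Finsupp.finset_sum_apply, Finsupp.single_apply]

theorem lam_eq_zero {h : ℕ} {q : Fin h → Belief Ω} {lam : Fin h → ℝ}
    (hnn : ∀ j, 0 ≤ lam j) {j : Fin h} (hj : q j ∉ (mkW q lam).support) : lam j = 0 := by
  have h0 : mkW q lam (q j) = 0 := Finsupp.notMem_support_iff.mp hj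
  rw [mkW_apply] at h0
  have hle : lam j ≤ ∑ j', if q j' = q j then lam j' else 0 := by
    have h1 := Finset.single_le_sum (f := fun j' => if q j' = q j then lam j' else 0)
      (fun i _ => by by_cases hi : q i = q j <;> simp [hi, hnn i]) (Finset.mem_univ j)
    simpa using h1
  have := hnn j
  linarith

theorem mkW_sum_mul {h : ℕ} (q : Fin h → Belief Ω) (lam : Fin h → ℝ) (hnn : ∀ j, 0 ≤ lam j)
    (f : Belief Ω → ℝ) :
    ∑ p ∈ (mkW q lam).support, mkW q lam p * f p = ∑ j, lam j * f (q j) := by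
  calc ∑ p ∈ (mkW q lam).support, mkW q lam p * f p
      = ∑ p ∈ (mkW q lam).support, ∑ j, if q j = p then lam j * f (q j) else 0 := by
        refine Finset.sum_congr rfl fun p hp => ?_
        rw [mkW_apply, Finset.sum_mul]
        refine Finset.sum_congr rfl fun j _ => ?_
        by_cases hqp : q j = p
        · rw [if_pos hqp, if_pos hqp, hqp]
        · simp [hqp]
    _ = ∑ j, ∑ p ∈ (mkW q lam).support, if q j = p then lam j * f (q j) else 0 :=
        Finset.sum_comm
    _ = ∑ j, if q j ∈ (mkW q lam).support then lam j * f (q j) else 0 := by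
        refine Finset.sum_congr rfl fun j _ => Finset.sum_ite_eq _ _ _
    _ = ∑ j, lam j * f (q j) := by
        refine Finset.sum_congr rfl fun j _ => ?_
        by_cases hq : q j ∈ (mkW q lam).support
        · rw [if_pos hq]
        · rw [if_neg hq, lam_eq_zero hnn hq, zero_mul]

def mkExp {h : ℕ} (q : Fin h → Belief Ω) (lam : Fin h → ℝ) (hnn : ∀ j, 0 ≤ lam j)
    (hsum : ∑ j, lam j = 1) : SPExp Ω where
  w := mkW q lam
  nonneg := fun p => by
    rw [mkW_apply]
    exact Finset.sum_nonneg fun j _ => by split; exacts [hnn j, le_rfl]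
  sum_one := by
    have h1 := mkW_sum_mul q lam hnn (fun _ => 1)
    simpa [hsum] using h1

theorem mkExp_expect {h : ℕ} (q : Fin h → Belief Ω) (lam : Fin h → ℝ) (hnn : ∀ j, 0 ≤ lam j)
    (hsum : ∑ j, lam j = 1) (f : Belief Ω → ℝ) :
    (mkExp q lam hnn hsum).expect f = ∑ j, lam j * f (q j) :=
  mkW_sum_mul q lam hnn f

theorem mkExp_tau_subset {h : ℕ} (q : Fin h → Belief Ω) (lam : Fin h → ℝ)
    (hnn : ∀ j, 0 ≤ lam j) (hsum : ∑ j, lam j = 1) {p : Belief Ω}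
    (hp : p ∈ (mkExp q lam hnn hsum).tau) : ∃ j, q j = p := by
  by_contra hno
  push_neg at hno
  have h0 : mkW q lam p = 0 := by
    rw [mkW_apply]; exact Finset.sum_eq_zero fun j _ => if_neg (hno j)
  exact (Finsupp.mem_support_iff.mp hp) h0

theorem mkExp_w {h : ℕ} (q : Fin h → Belief Ω) (lam : Fin h → ℝ) (hnn : ∀ j, 0 ≤ lam j)
    (hsum : ∑ j, lam j = 1) (p : Belief Ω) :
    (mkExp q lam hnn hsum).w p = ∑ j, if q j = p then lam j else 0 :=
  mkW_apply q lam p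

theorem sigma_apply (e : SPExp Ω) (ω : Ω) :
    (e.sigma).val ω = e.expect fun p => p.val ω := rfl

-- Compactness of the belief simplex
theorem isCompact_beliefSet :
    IsCompact {p : Ω → ℝ | (∀ ω, 0 ≤ p ω) ∧ ∑ ω, p ω = 1} := by
  have hc : IsCompact (Set.pi Set.univ fun _ : Ω => Set.Icc (0:ℝ) 1) :=
    isCompact_univ_pi fun _ => isCompact_Icc
  refine hc.of_isClosed_subset ?_ ?_
  · have heq : {p : Ω → ℝ | (∀ ω, 0 ≤ p ω) ∧ ∑ ω, p ω = 1}
        = (⋂ ω, {p : Ω → ℝ | 0 ≤ p ω}) ∩ {p : Ω → ℝ | ∑ ω, p ω = 1} := by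
      ext p; simp [Set.mem_iInter, Set.mem_setOf_eq]
    rw [heq]
    exact IsClosed.inter
      (isClosed_iInter fun ω => isClosed_le continuous_const (continuous_apply ω))
      (isClosed_eq (continuous_finset_sum _ fun ω _ => continuous_apply ω) continuous_const)
  · rintro p ⟨hnn, hs⟩ ω _
    refine ⟨hnn ω, ?_⟩
    calc p ω ≤ ∑ ω', p ω' := Finset.single_le_sum (fun i _ => hnn i) (Finset.mem_univ ω)
      _ = 1 := hs

instance : CompactSpace (Belief Ω) := isCompact_iff_compactSpace.mp isCompact_beliefSet

theorem tvTendsto_of_tendsto {ps : ℕ → Belief Ω} {p : Belief Ω}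
    (hp : Tendsto ps atTop (𝓝 p)) : TVTendsto ps p := by
  have hco : ∀ ω, Tendsto (fun i => (ps i).val ω) atTop (𝓝 (p.val ω)) := fun ω =>
    ((continuous_apply ω).tendsto _).comp ((continuous_subtype_val.tendsto _).comp hp)
  have h1 : Tendsto (fun i => ∑ ω, |(ps i).val ω - p.val ω|) atTop
      (𝓝 (∑ ω : Ω, |p.val ω - p.val ω|)) :=
    tendsto_finset_sum _ fun ω _ => ((hco ω).sub tendsto_const_nhds).abs
  unfold TVTendsto
  simpa using h1

theorem exists_bump (q : Belief Ω) (t : Finset (Belief Ω)) (hq : q ∉ t) :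
    ∃ f : Belief Ω → ℝ, Continuous f ∧ f q = 1 ∧ ∀ y ∈ t, f y = 0 := by
  by_cases ht : t.Nonempty
  · set δ := t.inf' ht (fun y => dist q y) with hδ
    have hδpos : 0 < δ := by
      rw [hδ, Finset.lt_inf'_iff]
      exact fun y hy => dist_pos.mpr (fun he => hq (he ▸ hy))
    refine ⟨fun x => max 0 (1 - dist x q / δ), ?_, ?_, ?_⟩
    · exact continuous_const.max
        (continuous_const.sub ((continuous_id.dist continuous_const).div_const δ))
    · simp [dist_self]
    · intro y hy
      have hd : δ ≤ dist y q := by rw [dist_comm]; exact Finset.inf'_le _ hy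
      have h2 : 1 - dist y q / δ ≤ 0 := by
        rw [sub_nonpos, le_div_iff₀ hδpos]; linarith
      exact max_eq_left h2
  · exact ⟨fun _ => 1, continuous_const, rfl, fun y hy => absurd ⟨y, hy⟩ ht⟩

theorem eq_triv_of_expect (e : SPExp Ω) (p : Belief Ω)
    (hf : ∀ f : Belief Ω → ℝ, Continuous f → e.expect f = f p) : e = SPExp.triv p := by
  apply spexp_ext
  ext q
  rw [triv_w]
  set s : Finset (Belief Ω) := insert p e.w.support with hs
  by_cases hq : q ∈ s
  · obtain ⟨f, hfc, hfq, hft⟩ := exists_bump q (s.erase q) (Finset.notMem_erase q s)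
    have hev : e.expect f = e.w q := by
      rw [SPExp.expect]
      calc ∑ p' ∈ e.w.support, e.w p' * f p'
          = ∑ p' ∈ e.w.support, if p' = q then e.w q else 0 := by
            refine Finset.sum_congr rfl fun p' hp' => ?_
            by_cases hpq : p' = q
            · rw [if_pos hpq, hpq, hfq, mul_one]
            · rw [if_neg hpq, hft p' (Finset.mem_erase.mpr ⟨hpq, by
                rw [hs]; exact Finset.mem_insert_of_mem hp'⟩), mul_zero]
        _ = if q ∈ e.w.support then e.w q else 0 := Finset.sum_ite_eq' _ _ _
        _ = e.w q := by
            by_cases hqs : q ∈ e.w.support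
            · rw [if_pos hqs]
            · rw [if_neg hqs, Finsupp.notMem_support_iff.mp hqs]
    have hfp : f p = if p = q then 1 else 0 := by
      by_cases hpq : p = q
      · rw [if_pos hpq, hpq, hfq]
      · rw [if_neg hpq]
        exact hft p (Finset.mem_erase.mpr ⟨hpq, by rw [hs]; exact Finset.mem_insert_self p _⟩)
    rw [← hev, hf f hfc, hfp]
  · have h1 : e.w q = 0 := Finsupp.notMem_support_iff.mp
      (fun hmem => hq (by rw [hs]; exact Finset.mem_insert_of_mem hmem))
    have h2 : p ≠ q := fun he => hq (by rw [hs, he]; exact Finset.mem_insert_self q _)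
    rw [h1, if_neg h2]

theorem mem_trivials_of_weakTendsto {es : ℕ → SPExp Ω} {e : SPExp Ω}
    (hw : WeakTendsto es e) (htr : ∀ i, es i ∈ Trivials Ω) : e ∈ Trivials Ω := by
  choose ps hps using htr
  obtain ⟨p, -, φ, hφ, hp⟩ := isCompact_univ.tendsto_subseq (x := ps)
    (fun n => Set.mem_univ _)
  refine ⟨p, (eq_triv_of_expect e p ?_).symm⟩
  intro f hfc
  have h1 : Tendsto (fun i => (es (φ i)).expect f) atTop (𝓝 (e.expect f)) :=
    (hw f hfc).comp hφ.tendsto_atTop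
  have h2 : Tendsto (fun i => (es (φ i)).expect f) atTop (𝓝 (f p)) := by
    have heq : (fun i => (es (φ i)).expect f) = fun i => f (ps (φ i)) := by
      funext i; rw [← hps (φ i), expect_triv]
    rw [heq]
    exact (hfc.tendsto p).comp hp
  exact tendsto_nhds_unique h1 h2

end LIC
end Aux
noncomputable section Aux2
open Filter Topology

namespace LIC

variable {Ω : Type*} [Fintype Ω] {F : Set (SPExp Ω)} {μ : Belief Ω} {h : ℕ}

def childEquiv (h n : ℕ) : Fin (h ^ n) × Fin h ≃ Fin (h ^ (n + 1)) :=
  finProdFinEquiv.trans (finCongr (pow_succ h n).symm)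

theorem childEquiv_apply {h n : ℕ} (m : Fin (h ^ n)) (j : Fin h) :
    childEquiv h n (m, j) = treeChild m j := by
  apply Fin.ext
  show (j : ℕ) + h * m = m * h + j
  ring

theorem treeChild_inj {h n : ℕ} {m m' : Fin (h ^ n)} {j j' : Fin h}
    (he : treeChild m j = treeChild m' j') : m = m' ∧ j = j' := by
  have h1 : ((m, j) : Fin (h ^ n) × Fin h) = (m', j') :=
    (childEquiv h n).injective (by rw [childEquiv_apply, childEquiv_apply, he])
  exact ⟨congrArg Prod.fst h1, congrArg Prod.snd h1⟩

theorem sum_treeChild {h n : ℕ} (f : Fin (h ^ (n + 1)) → ℝ) :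
    ∑ c, f c = ∑ m, ∑ j, f (treeChild m j) := by
  rw [← Equiv.sum_comp (childEquiv h n) f, Fintype.sum_prod_type]
  exact Finset.sum_congr rfl fun m _ => Finset.sum_congr rfl fun j _ => by
    rw [childEquiv_apply]

theorem descendant_zero_iff {n : ℕ} {c c' : Fin (h ^ n)} :
    Descendant (h := h) 0 c c' ↔ c = c' := Iff.rfl

theorem descendant_succ_iff {n l : ℕ} {c : Fin (h ^ n)} {c' : Fin (h ^ (n + (l + 1)))} :
    Descendant (h := h) (l + 1) c c' ↔
      ∃ c'' j, Descendant l c c'' ∧ c' = treeChild c'' j := Iff.rfl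

theorem desc_unique {n : ℕ} : ∀ (l : ℕ) {c₁ c₂ : Fin (h ^ n)} {c' : Fin (h ^ (n + l))},
    Descendant l c₁ c' → Descendant l c₂ c' → c₁ = c₂ := by
  intro l
  induction l with
  | zero => intro c₁ c₂ c' h1 h2
            exact (descendant_zero_iff.mp h1).trans (descendant_zero_iff.mp h2).symm
  | succ l ih =>
      rintro c₁ c₂ c' ⟨d₁, j₁, hd₁, he₁⟩ ⟨d₂, j₂, hd₂, he₂⟩
      obtain ⟨hd, -⟩ := treeChild_inj (he₁.symm.trans he₂)
      exact ih hd₁ (hd ▸ hd₂)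

theorem sum_ite_exists {α : Type*} (s : Finset α) (Q : α → Prop)
    (hQ : ∀ x ∈ s, ∀ y ∈ s, Q x → Q y → x = y) (v : ℝ) :
    (∑ x ∈ s, if Q x then v else 0) = if ∃ x ∈ s, Q x then v else 0 := by
  by_cases hex : ∃ x ∈ s, Q x
  · obtain ⟨x₀, hx₀s, hx₀⟩ := hex
    rw [if_pos ⟨x₀, hx₀s, hx₀⟩,
      Finset.sum_eq_single_of_mem x₀ hx₀s
        (fun y hy hne => if_neg (fun hQy => hne (hQ y hy x₀ hx₀s hQy hx₀))),
      if_pos hx₀]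
  · rw [if_neg hex]
    exact Finset.sum_eq_zero fun x hx => if_neg (fun hQx => hex ⟨x, hx, hQx⟩)

theorem w_le_one (e : SPExp Ω) (p : Belief Ω) : e.w p ≤ 1 := by
  by_cases hp : p ∈ e.w.support
  · calc e.w p ≤ ∑ q ∈ e.w.support, e.w q :=
        Finset.single_le_sum (fun q _ => e.nonneg q) hp
      _ = 1 := e.sum_one
  · rw [Finsupp.notMem_support_iff.mp hp]; norm_num

theorem pi_le_one (B : HBranch Ω F h μ) (n : ℕ) (m : Fin (h ^ n)) : B.π n m ≤ 1 := by
  calc B.π n m ≤ ∑ m', B.π n m' :=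
      Finset.single_le_sum (fun m' _ => B.π_nonneg n m') (Finset.mem_univ m)
    _ = 1 := B.π_sum n

theorem pi_child_le_w (B : HBranch Ω F h μ) (n : ℕ) (m : Fin (h ^ n)) (j : Fin h) :
    B.π (n + 1) (treeChild m j)
      ≤ B.π n m * (B.η n m).w (B.β (n + 1) (treeChild m j)) := by
  rw [← B.consistent n m (B.β (n + 1) (treeChild m j))]
  have h1 := Finset.single_le_sum
    (f := fun j' => if B.β (n + 1) (treeChild m j') = B.β (n + 1) (treeChild m j)
      then B.π (n + 1) (treeChild m j') else 0)
    (fun i _ => by by_cases hi : B.β (n+1) (treeChild m i) = B.β (n+1) (treeChild m j) <;>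
      simp [hi, B.π_nonneg]) (Finset.mem_univ j)
  simpa using h1

theorem pi_child_eq_zero {B : HBranch Ω F h μ} {n : ℕ} {m : Fin (h ^ n)} {j : Fin h}
    (h0 : B.π n m * (B.η n m).w (B.β (n + 1) (treeChild m j)) = 0) :
    B.π (n + 1) (treeChild m j) = 0 :=
  le_antisymm (h0 ▸ pi_child_le_w B n m j) (B.π_nonneg _ _)

theorem sum_pi_children (B : HBranch Ω F h μ) (n : ℕ) (m : Fin (h ^ n)) :
    ∑ j, B.π (n + 1) (treeChild m j) = B.π n m := by
  calc ∑ j, B.π (n + 1) (treeChild m j)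
      = ∑ j, if B.β (n + 1) (treeChild m j) ∈ (B.η n m).w.support
          then B.π (n + 1) (treeChild m j) else 0 := by
        refine Finset.sum_congr rfl fun j _ => ?_
        by_cases hb : B.β (n + 1) (treeChild m j) ∈ (B.η n m).w.support
        · rw [if_pos hb]
        · rw [if_neg hb,
            pi_child_eq_zero (by rw [Finsupp.notMem_support_iff.mp hb, mul_zero])]
    _ = ∑ j, ∑ p ∈ (B.η n m).w.support,
          if B.β (n + 1) (treeChild m j) = p then B.π (n + 1) (treeChild m j) else 0 := by
        refine Finset.sum_congr rfl fun j _ => ?_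
        rw [Finset.sum_ite_eq]
    _ = ∑ p ∈ (B.η n m).w.support,
          ∑ j, if B.β (n + 1) (treeChild m j) = p then B.π (n + 1) (treeChild m j) else 0 :=
        Finset.sum_comm
    _ = ∑ p ∈ (B.η n m).w.support, B.π n m * (B.η n m).w p :=
        Finset.sum_congr rfl fun p _ => B.consistent n m p
    _ = B.π n m := by rw [← Finset.mul_sum, (B.η n m).sum_one, mul_one]

theorem pi_child_le_parent (B : HBranch Ω F h μ) (n : ℕ) (m : Fin (h ^ n)) (j : Fin h) :
    B.π (n + 1) (treeChild m j) ≤ B.π n m := by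
  rw [← sum_pi_children B n m]
  exact Finset.single_le_sum (fun i _ => B.π_nonneg _ _) (Finset.mem_univ j)

theorem desc_mass (B : HBranch Ω F h μ) :
    ∀ (l n : ℕ) (c : Fin (h ^ n)),
      (∑ c' : Fin (h ^ (n + l)), if Descendant l c c' then B.π (n + l) c' else 0)
        = B.π n c := by
  intro l
  induction l with
  | zero =>
      intro n c
      show (∑ c' : Fin (h ^ n), if Descendant 0 c c' then B.π n c' else 0) = B.π n c
      have : ∀ c' : Fin (h ^ n), (if Descendant (h := h) 0 c c' then B.π n c' else 0)
          = if c = c' then B.π n c' else 0 := fun c' => by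
        by_cases hc : c = c' <;> simp [descendant_zero_iff, hc]
      rw [Finset.sum_congr rfl (fun c' _ => this c'), Finset.sum_ite_eq]
      simp
  | succ l ih =>
      intro n c
      show (∑ c' : Fin (h ^ ((n + l) + 1)),
          if Descendant (l + 1) c c' then B.π ((n + l) + 1) c' else 0) = B.π n c
      rw [sum_treeChild (h := h) (n := n + l)]
      have hstep : ∀ (m' : Fin (h ^ (n + l))),
          (∑ j, if Descendant (l + 1) c (treeChild m' j)
            then B.π ((n + l) + 1) (treeChild m' j) else 0)
          = if Descendant l c m' then B.π (n + l) m' else 0 := by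
        intro m'
        have hiff : ∀ j, Descendant (l + 1) c (treeChild m' j) ↔ Descendant l c m' := by
          intro j
          constructor
          · rintro ⟨d, j', hd, he⟩
            obtain ⟨hdm, -⟩ := treeChild_inj he
            exact hdm ▸ hd
          · intro hd; exact ⟨m', j, hd, rfl⟩
        by_cases hd : Descendant l c m'
        · rw [if_pos hd, ← sum_pi_children B (n + l) m']
          exact Finset.sum_congr rfl fun j _ => if_pos ((hiff j).mpr hd)
        · rw [if_neg hd]
          exact Finset.sum_eq_zero fun j _ => if_neg (fun hx => hd ((hiff j).mp hx))
      rw [Finset.sum_congr rfl (fun m' _ => hstep m')]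
      exact ih n c

end LIC
end Aux2
noncomputable section Aux3
open Filter Topology

namespace LIC

variable {Ω : Type*} [Fintype Ω] {F : Set (SPExp Ω)} {μ : Belief Ω} {h : ℕ}

def qOf (B : HBranch Ω F h μ) (n : ℕ) (m : Fin (h ^ n)) : Fin h → Belief Ω :=
  fun j => B.β (n + 1) (treeChild m j)

def lamOf (B : HBranch Ω F h μ) (n : ℕ) (m : Fin (h ^ n)) : Fin h → ℝ := fun j =>
  if 0 < B.π n m then B.π (n + 1) (treeChild m j) / B.π n m
  else if ∀ j' < j, qOf B n m j' ≠ qOf B n m j then (B.η n m).w (qOf B n m j) else 0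

theorem lamOf_nonneg (B : HBranch Ω F h μ) (n : ℕ) (m : Fin (h ^ n)) (j : Fin h) :
    0 ≤ lamOf B n m j := by
  rw [lamOf]
  by_cases hp : 0 < B.π n m
  · rw [if_pos hp]; exact div_nonneg (B.π_nonneg _ _) (le_of_lt hp)
  · rw [if_neg hp]
    by_cases hmin : ∀ j' < j, qOf B n m j' ≠ qOf B n m j
    · rw [if_pos hmin]; exact (B.η n m).nonneg _
    · rw [if_neg hmin]

theorem lamOf_le_one (B : HBranch Ω F h μ) (n : ℕ) (m : Fin (h ^ n)) (j : Fin h) :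
    lamOf B n m j ≤ 1 := by
  rw [lamOf]
  by_cases hp : 0 < B.π n m
  · rw [if_pos hp, div_le_one hp]; exact pi_child_le_parent B n m j
  · rw [if_neg hp]
    by_cases hmin : ∀ j' < j, qOf B n m j' ≠ qOf B n m j
    · rw [if_pos hmin]; exact w_le_one _ _
    · rw [if_neg hmin]; norm_num

theorem mkW_lamOf (B : HBranch Ω F h μ) (n : ℕ) (m : Fin (h ^ n)) :
    mkW (qOf B n m) (lamOf B n m) = (B.η n m).w := by
  ext p
  rw [mkW_apply]
  by_cases hp : 0 < B.π n m
  · have hterm : ∀ j, (if qOf B n m j = p then lamOf B n m j else 0)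
        = (if B.β (n + 1) (treeChild m j) = p then B.π (n + 1) (treeChild m j) else 0)
          / B.π n m := by
      intro j
      by_cases hq : qOf B n m j = p
      · rw [if_pos hq, if_pos (show B.β (n + 1) (treeChild m j) = p from hq), lamOf,
          if_pos hp]
      · rw [if_neg hq, if_neg (show ¬B.β (n + 1) (treeChild m j) = p from hq), zero_div]
    rw [Finset.sum_congr rfl (fun j _ => hterm j), ← Finset.sum_div, B.consistent n m p,
      mul_comm, mul_div_assoc, div_self (ne_of_gt hp), mul_one]
  · by_cases hex : ∃ j, qOf B n m j = p
    · set s : Finset (Fin h) := Finset.univ.filter (fun j => qOf B n m j = p) with hs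
      have hsne : s.Nonempty := by
        obtain ⟨j, hj⟩ := hex
        exact ⟨j, by rw [hs]; exact Finset.mem_filter.mpr ⟨Finset.mem_univ j, hj⟩⟩
      set j₀ := s.min' hsne with hj₀
      have hj₀mem : j₀ ∈ s := s.min'_mem hsne
      have hj₀q : qOf B n m j₀ = p := (Finset.mem_filter.mp hj₀mem).2
      have hmin₀ : ∀ j' < j₀, qOf B n m j' ≠ qOf B n m j₀ := by
        intro j' hj' hqe
        have : j₀ ≤ j' := s.min'_le j' (Finset.mem_filter.mpr
          ⟨Finset.mem_univ j', hqe.trans hj₀q⟩)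
        exact absurd hj' (not_lt.mpr this)
      rw [Finset.sum_eq_single_of_mem j₀ (Finset.mem_univ j₀) ?other]
      · rw [if_pos hj₀q, lamOf, if_neg hp, if_pos hmin₀, hj₀q]
      · intro j hj hne
        by_cases hq : qOf B n m j = p
        · rw [if_pos hq, lamOf, if_neg hp, if_neg, ]
          intro hmin
          have hle : j₀ ≤ j := s.min'_le j (Finset.mem_filter.mpr ⟨Finset.mem_univ j, hq⟩)
          have hlt : j₀ < j := lt_of_le_of_ne hle (by
            intro he; exact hne (he ▸ rfl))
          exact hmin j₀ hlt (hj₀q.trans hq.symm)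
        · rw [if_neg hq]
    · push_neg at hex
      rw [Finset.sum_eq_zero (fun j _ => if_neg (hex j))]
      by_cases hsupp : p ∈ (B.η n m).tau
      · obtain ⟨j, hj⟩ := B.compat_tau n m p hsupp
        exact absurd hj (hex j)
      · exact (Finsupp.notMem_support_iff.mp hsupp).symm

theorem lamOf_sum (B : HBranch Ω F h μ) (n : ℕ) (m : Fin (h ^ n)) :
    ∑ j, lamOf B n m j = 1 := by
  have hmass := mkW_sum_mul (qOf B n m) (lamOf B n m) (lamOf_nonneg B n m) (fun _ => 1)
  rw [mkW_lamOf B n m] at hmass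
  simp only [mul_one] at hmass
  rw [← hmass, (B.η n m).sum_one]

def expOf (B : HBranch Ω F h μ) (n : ℕ) (m : Fin (h ^ n)) : SPExp Ω :=
  mkExp (qOf B n m) (lamOf B n m) (lamOf_nonneg B n m) (lamOf_sum B n m)

theorem expOf_eq (B : HBranch Ω F h μ) (n : ℕ) (m : Fin (h ^ n)) :
    expOf B n m = B.η n m :=
  spexp_ext (mkW_lamOf B n m)

theorem eta_expect (B : HBranch Ω F h μ) (n : ℕ) (m : Fin (h ^ n)) (f : Belief Ω → ℝ) :
    (B.η n m).expect f = ∑ j, lamOf B n m j * f (qOf B n m j) := by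
  rw [← expOf_eq B n m]
  exact mkExp_expect _ _ _ _ f

theorem pi_child_eq (B : HBranch Ω F h μ) {n : ℕ} {m : Fin (h ^ n)} (j : Fin h)
    (hpos : 0 < B.π n m) :
    B.π (n + 1) (treeChild m j) = B.π n m * lamOf B n m j := by
  rw [lamOf, if_pos hpos, mul_div_cancel₀]
  exact ne_of_gt hpos

end LIC
end Aux3
noncomputable section Aux4
open Filter Topology

namespace LIC

variable {Ω : Type*} [Fintype Ω] {F : Set (SPExp Ω)} {μ : Belief Ω}

theorem histExp_succ (S : SeqP F μ) (g : Hist Ω → ℝ) (n : ℕ) (ξ : Hist Ω) :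
    histExp S g (n + 1) ξ =
      histExp S (fun ξ' => (S.next ξ').expect fun p => g ((S.next ξ', p) :: ξ')) n ξ := by
  induction n generalizing ξ with
  | zero => rfl
  | succ n ih =>
      show (S.next ξ).expect (fun p => histExp S g (n + 1) ((S.next ξ, p) :: ξ))
        = (S.next ξ).expect (fun p => histExp S
            (fun ξ' => (S.next ξ').expect fun p' => g ((S.next ξ', p') :: ξ')) n
            ((S.next ξ, p) :: ξ))
      congr 1
      funext p
      exact ih _

def Hfin (S : SeqP F μ) : ℕ → Finset (Hist Ω)
  | 0 => {([] : Hist Ω)}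
  | n + 1 => (Hfin S n).biUnion fun ξ => (S.next ξ).tau.image fun p => (S.next ξ, p) :: ξ

theorem mem_Hfin_iff (S : SeqP F μ) : ∀ (n : ℕ) (ξ' : Hist Ω),
    ξ' ∈ Hfin S n ↔ ξ' ∈ Hists S n := by
  intro n
  induction n with
  | zero => intro ξ'; simp [Hfin, Hists]
  | succ n ih =>
      intro ξ'
      constructor
      · intro hx
        obtain ⟨ξ, hξ, hmem⟩ := Finset.mem_biUnion.mp hx
        obtain ⟨p, hp, he⟩ := Finset.mem_image.mp hmem
        exact ⟨ξ, (ih ξ).mp hξ, p, hp, he.symm⟩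
      · rintro ⟨ξ, hξ, p, hp, he⟩
        exact Finset.mem_biUnion.mpr ⟨ξ, (ih ξ).mpr hξ,
          Finset.mem_image.mpr ⟨p, hp, he.symm⟩⟩

theorem Hfin_length (S : SeqP F μ) : ∀ (n : ℕ) {ξ : Hist Ω}, ξ ∈ Hfin S n → ξ.length = n := by
  intro n
  induction n with
  | zero => intro ξ hξ; simp [Hfin] at hξ; simp [hξ]
  | succ n ih =>
      intro ξ hξ
      obtain ⟨ξ₀, hξ₀, hmem⟩ := Finset.mem_biUnion.mp hξ
      obtain ⟨p, hp, he⟩ := Finset.mem_image.mp hmem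
      rw [← he, List.length_cons, ih hξ₀]

theorem histExp_eq_sum (S : SeqP F μ) : ∀ (n : ℕ) (g : Hist Ω → ℝ),
    histExp S g n [] = ∑ ξ ∈ Hfin S n, histProb ξ * g ξ := by
  intro n
  induction n with
  | zero => intro g; simp [histExp, Hfin, histProb]
  | succ n ih =>
      intro g
      rw [histExp_succ, ih]
      show _ = ∑ ξ ∈ Hfin S (n + 1), histProb ξ * g ξ
      rw [show Hfin S (n + 1)
          = (Hfin S n).biUnion (fun ξ => (S.next ξ).tau.image fun p => (S.next ξ, p) :: ξ)
          from rfl]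
      rw [Finset.sum_biUnion]
      · refine Finset.sum_congr rfl fun ξ hξ => ?_
        rw [Finset.sum_image (fun p₁ _ p₂ _ he => by
          injection he with h1 h2; injection h1)]
        rw [SPExp.expect, Finset.mul_sum]
        refine Finset.sum_congr rfl fun p hp => ?_
        show histProb ξ * ((S.next ξ).w p * g ((S.next ξ, p) :: ξ))
          = histProb ((S.next ξ, p) :: ξ) * g ((S.next ξ, p) :: ξ)
        rw [histProb]
        ring
      · intro ξ₁ h₁ ξ₂ h₂ hne
        rw [Function.onFun, Finset.disjoint_left]
        intro a ha₁ ha₂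
        obtain ⟨p₁, -, he₁⟩ := Finset.mem_image.mp ha₁
        obtain ⟨p₂, -, he₂⟩ := Finset.mem_image.mp ha₂
        apply hne
        have := he₁.trans he₂.symm
        injection this

theorem histExp_one (S : SeqP F μ) : ∀ (n : ℕ) (ξ : Hist Ω),
    histExp S (fun _ => (1 : ℝ)) n ξ = 1 := by
  intro n
  induction n with
  | zero => intro ξ; rfl
  | succ n ih =>
      intro ξ
      show (S.next ξ).expect (fun p => histExp S (fun _ => (1:ℝ)) n ((S.next ξ, p) :: ξ)) = 1
      have : ∀ p ∈ (S.next ξ).w.support,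
          (S.next ξ).w p * histExp S (fun _ => (1:ℝ)) n ((S.next ξ, p) :: ξ)
          = (S.next ξ).w p := fun p _ => by rw [ih, mul_one]
      rw [SPExp.expect, Finset.sum_congr rfl this, (S.next ξ).sum_one]

theorem sum_histProb (S : SeqP F μ) (n : ℕ) : ∑ ξ ∈ Hfin S n, histProb ξ = 1 := by
  have h1 := histExp_eq_sum S n (fun _ => 1)
  rw [histExp_one] at h1
  simpa using h1.symm

theorem padHist_zero (ξ : Hist Ω) : padHist μ ξ 0 = ξ := by simp [padHist]

theorem padHist_succ (ξ : Hist Ω) (l : ℕ) :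
    padHist μ ξ (l + 1)
      = (SPExp.triv (lastBelief μ ξ), lastBelief μ ξ) :: padHist μ ξ l := by
  simp [padHist, List.replicate_succ]

theorem lastBelief_padHist (ξ : Hist Ω) (l : ℕ) :
    lastBelief μ (padHist μ ξ l) = lastBelief μ ξ := by
  cases l with
  | zero => rw [padHist_zero]
  | succ l => rw [padHist_succ]; rfl

theorem histProb_padHist (ξ : Hist Ω) (l : ℕ) :
    histProb (padHist μ ξ l) = histProb ξ := by
  induction l with
  | zero => rw [padHist_zero]
  | succ l ih =>
      rw [padHist_succ, histProb, triv_w, if_pos rfl, one_mul, ih]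

theorem length_padHist (ξ : Hist Ω) (l : ℕ) :
    (padHist μ ξ l).length = l + ξ.length := by simp [padHist]

theorem padHist_mem_Hists {S : SeqP F μ} {ξ : Hist Ω} {n : ℕ} (hξ : ξ ∈ Hists S n)
    (hterm : TerminatesAfter S ξ) (l : ℕ) : padHist μ ξ l ∈ Hists S (n + l) := by
  induction l with
  | zero => rw [padHist_zero]; exact hξ
  | succ l ih =>
      show padHist μ ξ (l + 1) ∈ Hists S ((n + l) + 1)
      refine ⟨padHist μ ξ l, ih, lastBelief μ ξ, ?_, ?_⟩
      · rw [hterm l, triv_tau]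
        exact Finset.mem_singleton_self _
      · rw [padHist_succ, hterm l]

theorem histProb_nonneg : ∀ ξ : Hist Ω, 0 ≤ histProb ξ := by
  intro ξ
  induction ξ with
  | nil => norm_num [histProb]
  | cons s ξ ih =>
      rw [show histProb (s :: ξ) = s.1.w s.2 * histProb ξ from rfl]
      exact mul_nonneg (s.1.nonneg _) ih

theorem terminatesAfter_of_length {S : SeqP F μ} {n₀ : ℕ} (hstep : IsNStep S n₀)
    {ξ : Hist Ω} (hlen : n₀ ≤ ξ.length) : TerminatesAfter S ξ := by
  intro l
  rw [hstep _ (by rw [length_padHist]; omega), lastBelief_padHist]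

theorem termProb_eq_one {S : SeqP F μ} {n₀ : ℕ} (hstep : IsNStep S n₀) {N : ℕ}
    (hN : n₀ ≤ N) : termProb S N = 1 := by
  rw [termProb, histExp_eq_sum]
  have hone : ∀ ξ ∈ Hfin S N, histProb ξ * (if TerminatesAfter S ξ then (1:ℝ) else 0)
      = histProb ξ := fun ξ hξ => by
    rw [if_pos (terminatesAfter_of_length hstep (by rw [Hfin_length S N hξ]; exact hN)),
      mul_one]
  rw [Finset.sum_congr rfl hone, sum_histProb]

end LIC
end Aux4
noncomputable section Aux5
open Filter Topology

namespace LIC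

variable {Ω : Type*} [Fintype Ω] {F : Set (SPExp Ω)} {μ : Belief Ω} {h : ℕ}

theorem repr_term_transfer {S : SeqP F μ} {B : HBranch Ω F h μ}
    (hrep : Represents S B) (N : ℕ) : termProb S N ≤ B.termProb N := by
  obtain ⟨r, hr⟩ := hrep
  -- key implication
  have key : ∀ c : Fin (h ^ N), 0 < B.π N c → TerminatesAfter S (r N c) →
      B.TermAfter N c := by
    intro c hc hTc
    have hξH : r N c ∈ Hists S N := (hr N).1 c
    constructor
    · have h0 := hTc 0
      rw [padHist_zero] at h0
      exact ⟨lastBelief μ (r N c), by rw [← ((hr N).2.2.1 c).2, h0]⟩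
    · intro l c' hdesc hpos
      have hξlH : padHist μ (r N c) l ∈ Hists S (N + l) := padHist_mem_Hists hξH hTc l
      have hsum1 : (∑ c'' : Fin (h ^ (N + l)),
          if r (N + l) c'' = padHist μ (r N c) l then B.π (N + l) c'' else 0)
          = histProb (r N c) := by
        rw [← histProb_padHist (r N c) l]
        exact ((hr (N + l)).2.1 _ hξlH).symm
      have hQsum : (∑ c'' : Fin (h ^ (N + l)),
          if ∃ c₀, r N c₀ = r N c ∧ Descendant l c₀ c'' then B.π (N + l) c'' else 0)
          = histProb (r N c) := by
        have hpt : ∀ c'' : Fin (h ^ (N + l)),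
            (if ∃ c₀, r N c₀ = r N c ∧ Descendant l c₀ c'' then B.π (N + l) c'' else 0)
            = ∑ c₀, if r N c₀ = r N c ∧ Descendant l c₀ c'' then B.π (N + l) c'' else 0 := by
          intro c''
          by_cases hex : ∃ c₀, r N c₀ = r N c ∧ Descendant l c₀ c''
          · rw [if_pos hex]
            obtain ⟨c₀, h1, h2⟩ := hex
            rw [Finset.sum_eq_single_of_mem c₀ (Finset.mem_univ _)
              (fun y _ hne => if_neg (fun hy => hne (desc_unique l hy.2 h2))),
              if_pos ⟨h1, h2⟩]
          · rw [if_neg hex]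
            exact (Finset.sum_eq_zero fun c₀ _ => if_neg (fun hy => hex ⟨c₀, hy⟩)).symm
        rw [Finset.sum_congr rfl (fun c'' _ => hpt c''), Finset.sum_comm]
        have hinner : ∀ c₀ : Fin (h ^ N),
            (∑ c'' : Fin (h ^ (N + l)),
              if r N c₀ = r N c ∧ Descendant l c₀ c'' then B.π (N + l) c'' else 0)
            = if r N c₀ = r N c then B.π N c₀ else 0 := by
          intro c₀
          by_cases hrc : r N c₀ = r N c
          · rw [if_pos hrc, ← desc_mass B l N c₀]
            exact Finset.sum_congr rfl fun c'' _ => by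
              by_cases hd : Descendant l c₀ c''
              · rw [if_pos ⟨hrc, hd⟩, if_pos hd]
              · rw [if_neg (fun hx => hd hx.2), if_neg hd]
          · rw [if_neg hrc]
            exact Finset.sum_eq_zero fun c'' _ => if_neg (fun hx => hrc hx.1)
        rw [Finset.sum_congr rfl (fun c₀ _ => hinner c₀)]
        exact ((hr N).2.1 _ hξH).symm
      have hsuffix : r N c <:+ padHist μ (r N c) l := List.suffix_append _ _
      have h4 := (((hr N).2.2.2 l (r N c) hξH (padHist μ (r N c) l) hξlH).mp hsuffix)
      have hle : ∀ c'' ∈ Finset.univ (α := Fin (h ^ (N + l))),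
          (if r (N + l) c'' = padHist μ (r N c) l then B.π (N + l) c'' else 0)
          ≤ (if ∃ c₀, r N c₀ = r N c ∧ Descendant l c₀ c'' then B.π (N + l) c'' else 0) := by
        intro c'' _
        by_cases hr' : r (N + l) c'' = padHist μ (r N c) l
        · rw [if_pos hr']
          obtain ⟨c₀, hc₀, hd₀⟩ := h4 c'' hr'
          rw [if_pos ⟨c₀, hc₀, hd₀⟩]
        · rw [if_neg hr']
          by_cases hex : ∃ c₀, r N c₀ = r N c ∧ Descendant l c₀ c''
          · rw [if_pos hex]; exact B.π_nonneg _ _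
          · rw [if_neg hex]
      have heqpt := (Finset.sum_eq_sum_iff_of_le hle).mp
        (hsum1.trans hQsum.symm) c' (Finset.mem_univ c')
      rw [if_pos (⟨c, rfl, hdesc⟩ :
        ∃ c₀, r N c₀ = r N c ∧ Descendant l c₀ c')] at heqpt
      have hrc' : r (N + l) c' = padHist μ (r N c) l := by
        by_contra hno
        rw [if_neg hno] at heqpt
        linarith
      refine ⟨lastBelief μ (r N c), ?_⟩
      rw [← ((hr (N + l)).2.2.1 c').2, hrc', hTc l]
  -- sum comparison
  have hstep1 : termProb S N
      = ∑ c : Fin (h ^ N), if TerminatesAfter S (r N c) then B.π N c else 0 := by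
    rw [termProb, histExp_eq_sum]
    have h1 : ∀ ξ ∈ Hfin S N,
        histProb ξ * (if TerminatesAfter S ξ then (1:ℝ) else 0)
        = if TerminatesAfter S ξ then histProb ξ else 0 := fun ξ _ => by
      by_cases ht : TerminatesAfter S ξ <;> simp [ht]
    rw [Finset.sum_congr rfl h1]
    have h2 : ∀ ξ ∈ Hfin S N, (if TerminatesAfter S ξ then histProb ξ else 0)
        = ∑ c : Fin (h ^ N), if TerminatesAfter S ξ ∧ r N c = ξ then B.π N c else 0 := by
      intro ξ hξ
      by_cases ht : TerminatesAfter S ξ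
      · rw [if_pos ht, (hr N).2.1 ξ ((mem_Hfin_iff S N ξ).mp hξ)]
        exact Finset.sum_congr rfl fun c _ => by
          by_cases hrc : r N c = ξ
          · rw [if_pos hrc, if_pos ⟨ht, hrc⟩]
          · rw [if_neg hrc, if_neg (fun hx => hrc hx.2)]
      · rw [if_neg ht]
        exact (Finset.sum_eq_zero fun c _ => if_neg (fun hx => ht hx.1)).symm
    rw [Finset.sum_congr rfl h2, Finset.sum_comm]
    refine Finset.sum_congr rfl fun c _ => ?_
    have hrmem : r N c ∈ Hfin S N := (mem_Hfin_iff S N (r N c)).mpr ((hr N).1 c)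
    have h3 : ∀ ξ ∈ Hfin S N, (if TerminatesAfter S ξ ∧ r N c = ξ then B.π N c else 0)
        = if r N c = ξ then (if TerminatesAfter S ξ then B.π N c else 0) else 0 := by
      intro ξ _
      by_cases hrc : r N c = ξ
      · by_cases ht : TerminatesAfter S ξ <;> simp [hrc, ht]
      · simp [hrc, fun hx : TerminatesAfter S ξ ∧ r N c = ξ => hrc hx.2]
    rw [Finset.sum_congr rfl h3,
      Finset.sum_ite_eq (Hfin S N) (r N c)
        (fun ξ => if TerminatesAfter S ξ then B.π N c else 0), if_pos hrmem]
  rw [hstep1, HBranch.termProb]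
  refine Finset.sum_le_sum fun c _ => ?_
  by_cases ht : TerminatesAfter S (r N c)
  · rw [if_pos ht]
    by_cases hp : 0 < B.π N c
    · rw [if_pos (key c hp ht)]
    · have h0 : B.π N c = 0 := le_antisymm (not_lt.mp hp) (B.π_nonneg N c)
      rw [h0]
      by_cases h2 : B.TermAfter N c <;> simp [h2]
  · rw [if_neg ht]
    by_cases h2 : B.TermAfter N c
    · rw [if_pos h2]; exact B.π_nonneg N c
    · rw [if_neg h2]

end LIC
end Aux5

/-- Lemma 9 (lem-iterate-converge): from a sequence of finite-step sequential persuasions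
satisfying Assumption 3 (here given explicitly), represented by h-branching persuasions
B_k, one extracts a limiting h-branching persuasion B* with the same termination rate,
every finite prefix of which is a subsequential limit. -/
theorem lem_iterate_converge {Ω : Type*} [Fintype Ω] [Nonempty Ω]
    (F : Set (SPExp Ω)) (hTF : Trivials Ω ⊆ F)
    (v : Belief Ω → ℝ) (Vlo Vhi : ℝ) (hVlo : 0 < Vlo) (hVV : Vlo ≤ Vhi)
    (hvlo : ∀ p, Vlo ≤ v p) (hvhi : ∀ p, v p ≤ Vhi)
    (husc : UpperSemicontinuous v)
    (h : ℕ) (hA1 : Assumption1 F h) (μ : Belief Ω)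
    (nk : ℕ → ℕ) (Sk : ℕ → SeqP F μ)
    (hstep : ∀ k, IsNStep (Sk k) (nk k))
    (hlim : Filter.Tendsto (fun k => stepUtility v (Sk k) (nk k)) Filter.atTop
      (nhds (vInf F v μ)))
    (hterm : ∀ ε : ℝ, 0 < ε → ∃ N : ℕ, ∀ k, N ≤ nk k → 1 - ε ≤ termProb (Sk k) N)
    (B : ℕ → HBranch Ω F h μ) (hrep : ∀ k, Represents (Sk k) (B k)) :
    ∃ Bstar : HBranch Ω F h μ,
      (∀ ε : ℝ, 0 < ε → ∀ N : ℕ, (∀ k, N ≤ nk k → 1 - ε ≤ termProb (Sk k) N) →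
        1 - ε ≤ Bstar.termProb N) ∧
      ∀ n : ℕ, 1 ≤ n →
        ∃ φ : ℕ → ℕ, StrictMono φ ∧
          ∀ i ≤ n,
            (∀ m, Filter.Tendsto (fun l => (B (φ l)).π i m) Filter.atTop
              (nhds (Bstar.π i m))) ∧
            (∀ m, TVTendsto (fun l => (B (φ l)).β i m) (Bstar.β i m)) ∧
            (∀ m, WeakTendsto (fun l => (B (φ l)).η i m) (Bstar.η i m)) := by
  classical
  -- the compact metrizable parameter space and the diagonal subsequence
  let x : ℕ → ((Σ n : ℕ, Fin (h ^ n)) →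
      (Set.Icc (0:ℝ) 1 × Belief Ω × (Fin h → Set.Icc (0:ℝ) 1))) :=
    fun k i => (⟨(B k).π i.1 i.2,
        Set.mem_Icc.mpr ⟨(B k).π_nonneg i.1 i.2, LIC.pi_le_one (B k) i.1 i.2⟩⟩,
      (B k).β i.1 i.2,
      fun j => ⟨LIC.lamOf (B k) i.1 i.2 j,
        Set.mem_Icc.mpr ⟨LIC.lamOf_nonneg (B k) i.1 i.2 j,
          LIC.lamOf_le_one (B k) i.1 i.2 j⟩⟩)
  obtain ⟨a, ψ, hψ, hat⟩ := CompactSpace.tendsto_subseq x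
  have hcoord : ∀ i : (Σ n : ℕ, Fin (h ^ n)),
      Filter.Tendsto (fun l => x (ψ l) i) Filter.atTop (nhds (a i)) :=
    fun i => ((continuous_apply i).tendsto a).comp hat
  -- limit data
  let πs : ∀ n : ℕ, Fin (h ^ n) → ℝ := fun n m => ((a ⟨n, m⟩).1 : ℝ)
  let βs : ∀ n : ℕ, Fin (h ^ n) → Belief Ω := fun n m => (a ⟨n, m⟩).2.1
  let lams : ∀ n : ℕ, Fin (h ^ n) → Fin h → ℝ := fun n m j => ((a ⟨n, m⟩).2.2 j : ℝ)
  -- coordinatewise convergence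
  have hπ : ∀ (n : ℕ) (m : Fin (h ^ n)),
      Filter.Tendsto (fun l => (B (ψ l)).π n m) Filter.atTop (nhds (πs n m)) :=
    fun n m =>
      ((continuous_subtype_val.comp continuous_fst).tendsto _).comp (hcoord ⟨n, m⟩)
  have hβ : ∀ (n : ℕ) (m : Fin (h ^ n)),
      Filter.Tendsto (fun l => (B (ψ l)).β n m) Filter.atTop (nhds (βs n m)) :=
    fun n m => ((continuous_fst.comp continuous_snd).tendsto _).comp (hcoord ⟨n, m⟩)
  have hlamc : ∀ (n : ℕ) (m : Fin (h ^ n)) (j : Fin h),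
      Filter.Tendsto (fun l => LIC.lamOf (B (ψ l)) n m j) Filter.atTop
        (nhds (lams n m j)) :=
    fun n m j => by
      have hg : Continuous (fun y :
          (Set.Icc (0:ℝ) 1 × Belief Ω × (Fin h → Set.Icc (0:ℝ) 1)) => ((y.2.2 j : ℝ))) :=
        continuous_subtype_val.comp ((continuous_apply j).comp
          (continuous_snd.comp continuous_snd))
      exact (hg.tendsto _).comp (hcoord ⟨n, m⟩)
  -- basic properties of the limit data
  have hπ0 : ∀ (n : ℕ) (m : Fin (h ^ n)), 0 ≤ πs n m := fun n m => (a ⟨n, m⟩).1.2.1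
  have hlam_nn : ∀ (n : ℕ) (m : Fin (h ^ n)) (j : Fin h), 0 ≤ lams n m j :=
    fun n m j => ((a ⟨n, m⟩).2.2 j).2.1
  have hπsum : ∀ n : ℕ, ∑ m, πs n m = 1 := by
    intro n
    have h1 : Filter.Tendsto (fun l => ∑ m, (B (ψ l)).π n m) Filter.atTop
        (nhds (∑ m, πs n m)) := tendsto_finset_sum _ (fun m _ => hπ n m)
    have h2 : (fun l => ∑ m, (B (ψ l)).π n m) = fun _ => (1:ℝ) :=
      funext fun l => (B (ψ l)).π_sum n
    rw [h2] at h1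
    exact tendsto_nhds_unique h1 tendsto_const_nhds
  have hlamsum : ∀ (n : ℕ) (m : Fin (h ^ n)), ∑ j, lams n m j = 1 := by
    intro n m
    have h1 : Filter.Tendsto (fun l => ∑ j, LIC.lamOf (B (ψ l)) n m j) Filter.atTop
        (nhds (∑ j, lams n m j)) := tendsto_finset_sum _ (fun j _ => hlamc n m j)
    have h2 : (fun l => ∑ j, LIC.lamOf (B (ψ l)) n m j) = fun _ => (1:ℝ) :=
      funext fun l => LIC.lamOf_sum (B (ψ l)) n m
    rw [h2] at h1
    exact tendsto_nhds_unique h1 tendsto_const_nhds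
  have hβroot : ∀ m : Fin (h ^ 0), βs 0 m = μ := by
    intro m
    have h2 : (fun l => (B (ψ l)).β 0 m) = fun _ => μ :=
      funext fun l => (B (ψ l)).β_root m
    have h1 := hβ 0 m
    rw [h2] at h1
    exact tendsto_nhds_unique h1 tendsto_const_nhds
  have hchild : ∀ (n : ℕ) (m : Fin (h ^ n)) (j : Fin h),
      πs (n + 1) (treeChild m j) = πs n m * lams n m j := by
    intro n m j
    rcases eq_or_lt_of_le (hπ0 n m) with hz | hp
    · have hle : πs (n + 1) (treeChild m j) ≤ πs n m :=
        le_of_tendsto_of_tendsto' (hπ (n + 1) (treeChild m j)) (hπ n m)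
          (fun l => LIC.pi_child_le_parent (B (ψ l)) n m j)
      have h0 : πs (n + 1) (treeChild m j) = 0 :=
        le_antisymm (le_trans hle hz.symm.le) (hπ0 _ _)
      rw [h0, ← hz, zero_mul]
    · have hev : ∀ᶠ l in Filter.atTop, 0 < (B (ψ l)).π n m :=
        (hπ n m).eventually (eventually_gt_nhds hp)
      have h2 : Filter.Tendsto (fun l => (B (ψ l)).π (n + 1) (treeChild m j))
          Filter.atTop (nhds (πs n m * lams n m j)) := by
        refine Filter.Tendsto.congr' ?_ ((hπ n m).mul (hlamc n m j))
        filter_upwards [hev] with l hl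
        exact (LIC.pi_child_eq (B (ψ l)) j hl).symm
      exact tendsto_nhds_unique (hπ (n + 1) (treeChild m j)) h2
  -- the limiting experiments
  let ηs : ∀ n : ℕ, Fin (h ^ n) → SPExp Ω := fun n m =>
    LIC.mkExp (fun j => βs (n + 1) (treeChild m j)) (lams n m) (hlam_nn n m) (hlamsum n m)
  have hηexp : ∀ (n : ℕ) (m : Fin (h ^ n)) (f : Belief Ω → ℝ),
      (ηs n m).expect f = ∑ j, lams n m j * f (βs (n + 1) (treeChild m j)) :=
    fun n m f => LIC.mkExp_expect _ _ _ _ f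
  have hηw : ∀ (n : ℕ) (m : Fin (h ^ n)),
      WeakTendsto (fun l => (B (ψ l)).η n m) (ηs n m) := by
    intro n m f hf
    have h2 : (fun l => ((B (ψ l)).η n m).expect f)
        = fun l => ∑ j, LIC.lamOf (B (ψ l)) n m j * f (LIC.qOf (B (ψ l)) n m j) :=
      funext fun l => LIC.eta_expect _ n m f
    rw [h2, hηexp]
    exact tendsto_finset_sum _ fun j _ =>
      (hlamc n m j).mul ((hf.tendsto _).comp (hβ (n + 1) (treeChild m j)))
  have hηF : ∀ (n : ℕ) (m : Fin (h ^ n)), ηs n m ∈ F :=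
    fun n m => hA1.2 _ (fun l => (B (ψ l)).η_mem n m) _ (hηw n m)
  have hsig : ∀ (n : ℕ) (m : Fin (h ^ n)), (ηs n m).sigma = βs n m := by
    intro n m
    apply Subtype.ext
    funext ω
    have hcont : Continuous (fun p : Belief Ω => p.val ω) :=
      (continuous_apply ω).comp continuous_subtype_val
    have h1 := hηw n m _ hcont
    have h2 : (fun l => ((B (ψ l)).η n m).expect fun p => p.val ω)
        = fun l => ((B (ψ l)).β n m).val ω := funext fun l => by
      rw [← LIC.sigma_apply, (B (ψ l)).compat_sigma]
    rw [h2] at h1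
    have h3 : Filter.Tendsto (fun l => ((B (ψ l)).β n m).val ω) Filter.atTop
        (nhds ((βs n m).val ω)) := (hcont.tendsto _).comp (hβ n m)
    exact tendsto_nhds_unique h1 h3
  have hctau : ∀ (n : ℕ) (m : Fin (h ^ n)), ∀ p ∈ (ηs n m).tau,
      ∃ j : Fin h, βs (n + 1) (treeChild m j) = p :=
    fun n m p hp => LIC.mkExp_tau_subset _ _ _ _ hp
  have hcons : ∀ (n : ℕ) (m : Fin (h ^ n)) (p : Belief Ω),
      (∑ j : Fin h, if βs (n + 1) (treeChild m j) = p
        then πs (n + 1) (treeChild m j) else 0) = πs n m * (ηs n m).w p := by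
    intro n m p
    have hw : (ηs n m).w p
        = ∑ j, if βs (n + 1) (treeChild m j) = p then lams n m j else 0 :=
      LIC.mkExp_w _ _ _ _ p
    rw [hw, Finset.mul_sum]
    refine Finset.sum_congr rfl fun j _ => ?_
    by_cases hq : βs (n + 1) (treeChild m j) = p
    · rw [if_pos hq, if_pos hq, hchild n m j]
    · rw [if_neg hq, if_neg hq, mul_zero]
  set Bstar : HBranch Ω F h μ :=
    ⟨πs, βs, ηs, hπ0, hπsum, hηF, hβroot, hsig, hctau, hcons⟩ with hBstar
  have hBπ : Bstar.π = πs := by rw [hBstar]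
  have hBβ : Bstar.β = βs := by rw [hBstar]
  have hBη : Bstar.η = ηs := by rw [hBstar]
  refine ⟨Bstar, ?_, ?_⟩
  · -- part (A): termination probability
    intro ε hε N hyp
    have hBk : ∀ k, 1 - ε ≤ (B k).termProb N := by
      intro k
      rcases le_or_gt N (nk k) with hc | hc
      · exact le_trans (hyp k hc) (LIC.repr_term_transfer (hrep k) N)
      · have htriv : ∀ (d : ℕ) (c : Fin (h ^ d)), nk k ≤ d → (B k).η d c ∈ Trivials Ω := by
          intro d c hd
          obtain ⟨r, hr⟩ := hrep k
          refine ⟨lastBelief μ (r d c), ?_⟩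
          rw [← ((hr d).2.2.1 c).2]
          refine (hstep k (r d c) ?_).symm
          rw [LIC.Hfin_length (Sk k) d ((LIC.mem_Hfin_iff (Sk k) d (r d c)).mpr ((hr d).1 c))]
          exact hd
        have hterm1 : (B k).termProb N = 1 := by
          rw [HBranch.termProb]
          have hall : ∀ m : Fin (h ^ N), (B k).TermAfter N m := fun m =>
            ⟨htriv N m hc.le, fun l c' _ _ => htriv (N + l) c' (by omega)⟩
          rw [Finset.sum_congr rfl fun m _ => if_pos (hall m)]
          exact (B k).π_sum N
        rw [hterm1]; linarith
    have hstay : ∀ (d : ℕ) (c : Fin (h ^ d)), ηs d c ∉ Trivials Ω →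
        ∀ᶠ t in Filter.atTop, (B (ψ t)).η d c ∉ Trivials Ω := by
      intro d c hnt
      by_contra hcon
      rw [Filter.not_eventually] at hcon
      obtain ⟨θ, hθ, hall⟩ := Filter.extraction_of_frequently_atTop
        (hcon.mono fun t ht => not_not.mp ht)
      exact hnt (LIC.mem_trivials_of_weakTendsto
        (fun f hf => ((hηw d c) f hf).comp hθ.tendsto_atTop) hall)
    have hbad : ∀ m : Fin (h ^ N), ¬ Bstar.TermAfter N m →
        ∀ᶠ t in Filter.atTop, ¬ (B (ψ t)).TermAfter N m := by
      intro m hm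
      rw [HBranch.TermAfter] at hm
      push_neg at hm
      by_cases htr : Bstar.η N m ∈ Trivials Ω
      · obtain ⟨l0, c', hdesc, hpos, hnt⟩ := hm htr
        have h1 : ∀ᶠ t in Filter.atTop, (B (ψ t)).η (N + l0) c' ∉ Trivials Ω :=
          hstay (N + l0) c' (by rw [← hBη]; exact hnt)
        have h2 : ∀ᶠ t in Filter.atTop, 0 < (B (ψ t)).π (N + l0) c' :=
          (hπ (N + l0) c').eventually (eventually_gt_nhds (by rw [← hBπ]; exact hpos))
        filter_upwards [h1, h2] with t h1t h2t hterm
        exact h1t (hterm.2 l0 c' hdesc h2t)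
      · have h1 : ∀ᶠ t in Filter.atTop, (B (ψ t)).η N m ∉ Trivials Ω :=
          hstay N m (by rw [← hBη]; exact htr)
        filter_upwards [h1] with t ht hterm
        exact ht hterm.1
    set bad : Finset (Fin (h ^ N)) :=
      Finset.univ.filter (fun m => ¬ Bstar.TermAfter N m) with hbadset
    have hev : ∀ᶠ t in Filter.atTop, ∀ m ∈ bad, ¬ (B (ψ t)).TermAfter N m :=
      (Filter.eventually_all_finset bad).mpr
        fun m hm => hbad m (Finset.mem_filter.mp hm).2
    have hsumle : ∀ᶠ t in Filter.atTop, ∑ m ∈ bad, (B (ψ t)).π N m ≤ ε := by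
      filter_upwards [hev] with t ht
      have hsub : bad ⊆ Finset.univ.filter (fun m => ¬ (B (ψ t)).TermAfter N m) :=
        fun m hm => Finset.mem_filter.mpr ⟨Finset.mem_univ m, ht m hm⟩
      have h1 : ∑ m ∈ bad, (B (ψ t)).π N m
          ≤ ∑ m ∈ Finset.univ.filter (fun m => ¬ (B (ψ t)).TermAfter N m),
            (B (ψ t)).π N m :=
        Finset.sum_le_sum_of_subset_of_nonneg hsub (fun m _ _ => (B (ψ t)).π_nonneg N m)
      have h2 : ∑ m ∈ Finset.univ.filter (fun m => ¬ (B (ψ t)).TermAfter N m),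
          (B (ψ t)).π N m = 1 - (B (ψ t)).termProb N := by
        have h3 : ∀ m : Fin (h ^ N),
            (if ¬ (B (ψ t)).TermAfter N m then (B (ψ t)).π N m else 0)
            = (B (ψ t)).π N m
              - (if (B (ψ t)).TermAfter N m then (B (ψ t)).π N m else 0) := by
          intro m; by_cases hx : (B (ψ t)).TermAfter N m <;> simp [hx]
        rw [Finset.sum_filter, Finset.sum_congr rfl fun m _ => h3 m,
          Finset.sum_sub_distrib, (B (ψ t)).π_sum N, HBranch.termProb]
      have h4 := hBk (ψ t)
      linarith
    have hlim2 : Filter.Tendsto (fun t => ∑ m ∈ bad, (B (ψ t)).π N m) Filter.atTop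
        (nhds (∑ m ∈ bad, πs N m)) := tendsto_finset_sum _ fun m _ => hπ N m
    have hfin : ∑ m ∈ bad, πs N m ≤ ε := le_of_tendsto hlim2 hsumle
    have h6 : Bstar.termProb N = 1 - ∑ m ∈ bad, πs N m := by
      rw [HBranch.termProb, hBπ]
      have h3 : ∀ m : Fin (h ^ N),
          (if Bstar.TermAfter N m then πs N m else 0)
          = πs N m - (if ¬ Bstar.TermAfter N m then πs N m else 0) := by
        intro m; by_cases hx : Bstar.TermAfter N m <;> simp [hx]
      rw [Finset.sum_congr rfl fun m _ => h3 m, Finset.sum_sub_distrib, hπsum N,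
        hbadset, Finset.sum_filter]
    rw [h6]
    linarith
  · -- part (B): subsequential convergence
    intro n _
    refine ⟨ψ, hψ, fun i _ => ⟨?_, ?_, ?_⟩⟩
    · intro m; rw [hBπ]; exact hπ i m
    · intro m; rw [hBβ]; exact LIC.tvTendsto_of_tendsto (hβ i m)
    · intro m; rw [hBη]; exact hηw i m
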